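/- (Rule 2) Let T be a finite tree on vertex set V, let S be a total [1,2]-set of T, and let v ∈ S be a vertex with exactly one neighbor in S. Form the graph T₂ on V ⊕ Unit by keeping all edges of T (on the left summand) and adding the single edge between (inl v) and the new vertex w = inr (). Then T₂ is a tree and (inl '' S) ∪ {w} is a total [1,2]-set of T₂. -/

import Mathlib

/-- `S` is a total `[1,2]`-set of `G`: every vertex of `G` (whether in `S` or
not) has at least one and at most two neighbors in `S`. -/
def IsTotalOneTwoSet {V : Type*} (G : SimpleGraph V) (S : Set V) : Prop :=
  ∀ v : V, 1 ≤ (G.neighborSet v ∩ S).ncard ∧ (G.neighborSet v ∩ S).ncard ≤ 2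

/-- The graph obtained from `T` by adding one new vertex `Sum.inr ()` joined
to `v` by a single edge. -/
def addLeaf {V : Type*} (T : SimpleGraph V) (v : V) : SimpleGraph (V ⊕ Unit) :=
  T.map (⟨Sum.inl, Sum.inl_injective⟩ : V ↪ V ⊕ Unit) ⊔
    SimpleGraph.fromEdgeSet {s(Sum.inl v, Sum.inr ())}

open SimpleGraph

section Aux

variable {V : Type*} (T : SimpleGraph V) (v : V)

/-- The natural hom from `T` to `T.map inl`. -/
def mapHom : T →g T.map (⟨Sum.inl, Sum.inl_injective⟩ : V ↪ V ⊕ Unit) where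
  toFun := Sum.inl
  map_rel' := fun h => (map_adj _ _ _ _).2 ⟨_, _, h, rfl, rfl⟩

variable {T v}

lemma addLeaf_adj {x y : V ⊕ Unit} :
    (addLeaf T v).Adj x y ↔
      (∃ a b, T.Adj a b ∧ Sum.inl a = x ∧ Sum.inl b = y) ∨
      (x = Sum.inl v ∧ y = Sum.inr ()) ∨ (x = Sum.inr () ∧ y = Sum.inl v) := by
  simp only [addLeaf, sup_adj, SimpleGraph.map_adj, Function.Embedding.coeFn_mk,
    fromEdgeSet_adj, Set.mem_singleton_iff, Sym2.eq_iff]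
  constructor
  · rintro (h | ⟨(⟨h1, h2⟩ | ⟨h1, h2⟩), hne⟩)
    · exact Or.inl ((map_adj (⟨Sum.inl, Sum.inl_injective⟩ : V ↪ V ⊕ Unit) T x y).1 h)
    · exact Or.inr (Or.inl ⟨h1, h2⟩)
    · exact Or.inr (Or.inr ⟨h1, h2⟩)
  · rintro (h | ⟨h1, h2⟩ | ⟨h1, h2⟩)
    · exact Or.inl ((map_adj (⟨Sum.inl, Sum.inl_injective⟩ : V ↪ V ⊕ Unit) T x y).2 h)
    · exact Or.inr ⟨Or.inl ⟨h1, h2⟩, by subst h1 h2; simp⟩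
    · exact Or.inr ⟨Or.inr ⟨h1, h2⟩, by subst h1 h2; simp⟩

lemma pullWalk {x y : V ⊕ Unit}
    (w : (T.map (⟨Sum.inl, Sum.inl_injective⟩ : V ↪ V ⊕ Unit)).Walk x y) :
    ∀ {x' y' : V} (hx : Sum.inl x' = x) (hy : Sum.inl y' = y),
    ∃ w' : T.Walk x' y', w'.map (mapHom T) = w.copy hx.symm hy.symm := by
  induction w with
  | nil =>
    intro x' y' hx hy
    cases Sum.inl_injective (hx.trans hy.symm)
    subst hx
    exact ⟨Walk.nil, by simp; rfl⟩
  | @cons u z y h p ih =>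
    intro x' y' hx hy
    obtain ⟨a, b, hab, ha, hb⟩ := (map_adj _ _ _ _).1 h
    simp only [Function.Embedding.coeFn_mk] at ha hb
    cases Sum.inl_injective (ha.trans hx.symm)
    subst hx hb
    obtain ⟨p', hp'⟩ := ih rfl hy
    refine ⟨Walk.cons hab p', ?_⟩
    rw [Walk.map_cons, Walk.copy_cons]
    rw [hp']
    rfl

lemma addLeaf_isAcyclic (hT : T.IsAcyclic) : (addLeaf T v).IsAcyclic := by
  intro a c hc
  classical
  rcases Classical.em (Sum.inr () ∈ c.support) with hr | hr
  · -- a cycle through the degree-one vertex is impossible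
    have hd := hc.rotate hr
    set d := c.rotate _ hr with hdef
    clear_value d
    cases d with
    | nil => exact Walk.IsCycle.not_of_nil hd
    | @cons _ b _ h p =>
      have hb : b = Sum.inl v := by
        rcases addLeaf_adj.1 h with ⟨a', b', _, ha', _⟩ | ⟨h1, _⟩ | ⟨_, h2⟩
        · exact absurd ha' (by simp)
        · exact absurd h1 (by simp)
        · exact h2
      subst hb
      have hpnil : ¬ p.Nil := Walk.not_nil_of_ne (by simp)
      have hrev : ¬ p.reverse.Nil := Walk.not_nil_of_ne (by simp)
      obtain ⟨b2, h2, q, hq⟩ := Walk.not_nil_iff.1 hrev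
      have hb2 : b2 = Sum.inl v := by
        rcases addLeaf_adj.1 h2 with ⟨a', b', _, ha', _⟩ | ⟨h1, _⟩ | ⟨_, h3⟩
        · exact absurd ha' (by simp)
        · exact absurd h1 (by simp)
        · exact h3
      subst hb2
      have hmem : s(Sum.inr (), Sum.inl v) ∈ p.reverse.edges := by
        rw [hq]; simp
      rw [Walk.edges_reverse, List.mem_reverse] at hmem
      have hnodup := hd.edges_nodup
      rw [Walk.edges_cons, List.nodup_cons] at hnodup
      exact hnodup.1 (by simpa only [Sym2.eq_swap] using hmem)
  · -- the cycle avoids the new vertex; pull it back to `T`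
    have hedges : ∀ e ∈ c.edges, e ∈ (T.map (⟨Sum.inl, Sum.inl_injective⟩ : V ↪ V ⊕ Unit)).edgeSet := by
      intro e he
      induction e with
      | h x y =>
        have hadj := c.adj_of_mem_edges he
        have hxs := c.fst_mem_support_of_mem_edges he
        have hys := c.snd_mem_support_of_mem_edges he
        rcases addLeaf_adj.1 hadj with h | ⟨_, h2⟩ | ⟨h1, _⟩
        · exact (map_adj (⟨Sum.inl, Sum.inl_injective⟩ : V ↪ V ⊕ Unit) T x y).2 h
        · exact absurd (h2 ▸ hys) hr
        · exact absurd (h1 ▸ hxs) hr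
    have hc2 : (c.transfer _ hedges).IsCycle := hc.transfer hedges
    set c2 := c.transfer _ hedges with hc2def
    clear_value c2
    obtain ⟨b2, h2, q, hq⟩ := Walk.not_nil_iff.1 hc2.not_nil
    obtain ⟨a', b', _, ha', _⟩ := (map_adj _ _ _ _).1 h2
    simp only [Function.Embedding.coeFn_mk] at ha'
    subst ha'
    obtain ⟨w', hw'⟩ := pullWalk c2 rfl rfl
    rw [Walk.copy_rfl_rfl] at hw'
    rw [← hw'] at hc2
    exact hT w' ((Walk.map_isCycle_iff_of_injective Sum.inl_injective).1 hc2)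

lemma mapT_le_addLeaf : T.map (⟨Sum.inl, Sum.inl_injective⟩ : V ↪ V ⊕ Unit) ≤ addLeaf T v :=
  le_sup_left

lemma addLeaf_connected (hT : T.Connected) : (addLeaf T v).Connected := by
  rw [connected_iff]
  have key : ∀ x : V ⊕ Unit, (addLeaf T v).Reachable x (Sum.inl v) := by
    rintro (x | ⟨⟩)
    · exact ((hT.preconnected x v).map (mapHom T)).mono mapT_le_addLeaf
    · exact (addLeaf_adj.2 (Or.inr (Or.inr ⟨rfl, rfl⟩))).reachable
  exact ⟨fun x y => (key x).trans (key y).symm, ⟨Sum.inl v⟩⟩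

end Aux

theorem rule2_addBlackLeaf_totalOneTwoSet {V : Type*} [Fintype V]
    (T : SimpleGraph V) (hT : T.IsTree)
    (S : Set V) (hS : IsTotalOneTwoSet T S)
    (v : V) (hv : v ∈ S) (hone : (T.neighborSet v ∩ S).ncard = 1) :
    (addLeaf T v).IsTree ∧
    IsTotalOneTwoSet (addLeaf T v) (Sum.inl '' S ∪ {Sum.inr ()}) := by
  constructor
  · exact ⟨addLeaf_connected hT.isConnected, addLeaf_isAcyclic hT.IsAcyclic⟩
  · rintro (u | ⟨⟩)
    · by_cases hu : u = v
      · subst hu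
        have hset : (addLeaf T u).neighborSet (Sum.inl u) ∩ (Sum.inl '' S ∪ {Sum.inr ()}) =
            Sum.inl '' (T.neighborSet u ∩ S) ∪ {Sum.inr ()} := by
          ext x
          cases x with
          | inl b =>
            simp only [Set.mem_inter_iff, mem_neighborSet, addLeaf_adj, Set.mem_union,
              Set.mem_image, Set.mem_singleton_iff]
            aesop
          | inr b =>
            simp only [Set.mem_inter_iff, mem_neighborSet, addLeaf_adj, Set.mem_union,
              Set.mem_image, Set.mem_singleton_iff]
            aesop
        rw [hset, Set.ncard_union_eq (by simp) ((T.neighborSet u ∩ S).toFinite.image _)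
          (Set.finite_singleton _), Set.ncard_image_of_injective _ Sum.inl_injective, hone]
        simp
      · have hset : (addLeaf T v).neighborSet (Sum.inl u) ∩ (Sum.inl '' S ∪ {Sum.inr ()}) =
            Sum.inl '' (T.neighborSet u ∩ S) := by
          ext x
          cases x with
          | inl b =>
            simp only [Set.mem_inter_iff, mem_neighborSet, addLeaf_adj, Set.mem_union,
              Set.mem_image, Set.mem_singleton_iff]
            aesop
          | inr b =>
            simp only [Set.mem_inter_iff, mem_neighborSet, addLeaf_adj, Set.mem_union,
              Set.mem_image, Set.mem_singleton_iff]
            aesop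
        rw [hset, Set.ncard_image_of_injective _ Sum.inl_injective]
        exact hS u
    · have hset : (addLeaf T v).neighborSet (Sum.inr ()) ∩ (Sum.inl '' S ∪ {Sum.inr ()}) =
          {Sum.inl v} := by
        ext x
        cases x with
        | inl b =>
          simp only [Set.mem_inter_iff, mem_neighborSet, addLeaf_adj, Set.mem_union,
            Set.mem_image, Set.mem_singleton_iff]
          aesop
        | inr b =>
          simp only [Set.mem_inter_iff, mem_neighborSet, addLeaf_adj, Set.mem_union,
            Set.mem_image, Set.mem_singleton_iff]
          aesop
      rw [hset]
      simp
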